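/- If A is a d×d real matrix such that for every nonzero x ∈ ℝ^d there exists an index k with x_k (Ax)_k > 0, then A is a P-matrix (every principal minor of A is positive); and conversely every P-matrix has this property. -/

import Mathlib

open Matrix Polynomial

private lemma eval_charpoly' {n : Type*} [Fintype n] [DecidableEq n] (M : Matrix n n ℝ) (t : ℝ) :
    M.charpoly.eval t = (Matrix.diagonal (fun _ => t) - M).det := by
  rw [Matrix.charpoly, ← Polynomial.coe_evalRingHom, RingHom.map_det]
  congr 1
  ext i j
  by_cases h : i = j <;> simp [charmatrix, h, Matrix.diagonal_apply, Matrix.scalar_apply]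

private lemma det_pos_of_sign {n : Type*} [Fintype n] [DecidableEq n] (B : Matrix n n ℝ)
    (h : ∀ x : n → ℝ, x ≠ 0 → ∃ k, x k * (B.mulVec x) k > 0) : 0 < B.det := by
  cases isEmpty_or_nonempty n with
  | inl hE => simp [Matrix.det_isEmpty]
  | inr hNE =>
    set p := (-B).charpoly with hp
    have heval : ∀ t : ℝ, p.eval t = (Matrix.diagonal (fun _ => t) + B).det := by
      intro t; rw [hp, eval_charpoly', sub_neg_eq_add]
    have key : ∀ t : ℝ, 0 ≤ t → p.eval t ≠ 0 := by
      intro t ht h0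
      rw [heval] at h0
      obtain ⟨x, hx0, hx⟩ := (Matrix.exists_mulVec_eq_zero_iff).mpr h0
      obtain ⟨k, hk⟩ := h x hx0
      have hxk : (B.mulVec x) k = -(t * x k) := by
        have := congrFun hx k
        simp [Matrix.add_mulVec, Matrix.mulVec_diagonal] at this
        linarith
      rw [hxk] at hk
      nlinarith [sq_nonneg (x k)]
    have hdeg : 0 < p.degree := by
      rw [hp, Matrix.charpoly_degree_eq_dim]
      exact_mod_cast Fintype.card_pos
    have htend := Polynomial.tendsto_atTop_of_leadingCoeff_nonneg p hdeg
      (by rw [hp, (Matrix.charpoly_monic (-B)).leadingCoeff]; norm_num)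
    obtain ⟨t0, ht0⟩ :=
      ((htend.eventually_gt_atTop 0).and (Filter.eventually_ge_atTop (0:ℝ))).exists
    have h0pos : 0 < p.eval 0 := by
      rcases lt_trichotomy (p.eval 0) 0 with hlt | heq | hgt
      · exfalso
        have hsub : (0:ℝ) ∈ Set.Icc (p.eval 0) (p.eval t0) := ⟨hlt.le, ht0.1.le⟩
        obtain ⟨c, hc, hc0⟩ := intermediate_value_Icc ht0.2 (p.continuous_aeval.continuousOn) hsub
        exact key c hc.1 hc0
      · exact absurd heq (key 0 le_rfl)
      · exact hgt
    rw [heval 0] at h0pos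
    simpa using h0pos

private lemma det_piecewise_single {n : Type*} [Fintype n] [DecidableEq n] (B : Matrix n n ℝ)
    (t : Finset n) :
    (Matrix.of (t.piecewise (fun i => (Pi.single i 1 : n → ℝ)) (fun i => B i))).det
      = (B.submatrix (fun i : {i // i ∉ t} => (i : n)) (fun i : {i // i ∉ t} => (i : n))).det := by
  classical
  set M := Matrix.of (t.piecewise (fun i => (Pi.single i 1 : n → ℝ)) (fun i => B i)) with hM
  rw [← Matrix.det_submatrix_equiv_self (Equiv.sumCompl (· ∈ t)) M]
  have : M.submatrix (Equiv.sumCompl (· ∈ t)) (Equiv.sumCompl (· ∈ t)) = Matrix.fromBlocks 1 0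
      (B.submatrix (fun i : {i // i ∉ t} => (i : n)) (fun j : {j // j ∈ t} => (j : n)))
      (B.submatrix (fun i : {i // i ∉ t} => (i : n)) (fun j : {j // j ∉ t} => (j : n))) := by
    ext i j
    cases i with
    | inl i =>
      cases j with
      | inl j =>
        simp only [hM, Matrix.submatrix_apply, Equiv.sumCompl_apply_inl, Matrix.of_apply, Matrix.fromBlocks_apply₁₁]
        rw [Finset.piecewise_eq_of_mem _ _ _ i.2]
        by_cases hij : i = j
        · subst hij
          rw [Pi.single_eq_same, Matrix.one_apply_eq]
        · rw [Pi.single_apply, if_neg (fun h => hij (Subtype.ext h.symm)), Matrix.one_apply_ne hij]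
      | inr j =>
        have hne : (j : n) ≠ (i : n) := fun hh => j.2 (hh ▸ i.2)
        simp [hM, Finset.piecewise, i.2, Pi.single_apply, hne]
    | inr i =>
      cases j with
      | inl j => simp [hM, Finset.piecewise, i.2]
      | inr j => simp [hM, Finset.piecewise, i.2]
  rw [this, Matrix.det_fromBlocks_zero₁₂, Matrix.det_one, one_mul]

private lemma det_subtype_congr {n : Type*} [Fintype n] [DecidableEq n] (B : Matrix n n ℝ)
    {p q : n → Prop} [DecidablePred p] [DecidablePred q] (h : ∀ i, p i ↔ q i) :
    (B.submatrix (fun i : {i // p i} => (i : n)) (fun i : {i // p i} => (i : n))).det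
      = (B.submatrix (fun i : {i // q i} => (i : n)) (fun i : {i // q i} => (i : n))).det := by
  rw [← Matrix.det_submatrix_equiv_self (Equiv.subtypeEquivRight h)
    (B.submatrix (fun i : {i // q i} => (i : n)) (fun i : {i // q i} => (i : n))),
    Matrix.submatrix_submatrix]
  rfl

set_option maxHeartbeats 1000000 in
private lemma det_add_diagonal_pos {n : Type*} [Fintype n] [DecidableEq n] (B : Matrix n n ℝ)
    (c : n → ℝ) (hc : ∀ i, 0 ≤ c i)
    (hB : ∀ t : Finset n,
      0 < (B.submatrix (fun i : {i // i ∈ t} => (i : n)) (fun i : {i // i ∈ t} => (i : n))).det) :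
    0 < (B + Matrix.diagonal c).det := by
  classical
  have hrows : (B + Matrix.diagonal c) =
      Matrix.of ((fun i => c i • (Pi.single i 1 : n → ℝ)) + (fun i => B i)) := by
    ext i j
    by_cases h : i = j <;>
      simp [Matrix.diagonal_apply, h, Pi.single_apply, add_comm]
  have hD : ∀ t : Finset n,
      0 < (B.submatrix (fun i : {i // i ∉ t} => (i : n))
            (fun i : {i // i ∉ t} => (i : n))).det := by
    intro t
    rw [det_subtype_congr B (q := fun i => i ∈ tᶜ) (fun i => (Finset.mem_compl).symm)]
    convert hB tᶜ using 2
  rw [hrows]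
  have hdet : (Matrix.of ((fun i => c i • (Pi.single i 1 : n → ℝ)) + (fun i => B i))).det
      = ∑ t : Finset n, (Matrix.detRowAlternating
          (t.piecewise (fun i => c i • (Pi.single i 1 : n → ℝ)) (fun i => B i)) : ℝ) := by
    exact (Matrix.detRowAlternating.toMultilinearMap.map_add_univ
      (fun i => c i • (Pi.single i 1 : n → ℝ)) (fun i => B i))
  rw [hdet]
  have hterm : ∀ t : Finset n,
      (Matrix.detRowAlternating
        (t.piecewise (fun i => c i • (Pi.single i 1 : n → ℝ)) (fun i => B i)) : ℝ)
      = (∏ i ∈ t, c i) *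
        (B.submatrix (fun i : {i // i ∉ t} => (i : n))
          (fun i : {i // i ∉ t} => (i : n))).det := by
    intro t
    have hpw : t.piecewise (fun i => c i • (Pi.single i 1 : n → ℝ)) (fun i => B i)
        = t.piecewise
            (fun i => c i • (t.piecewise (fun i => (Pi.single i 1 : n → ℝ)) (fun i => B i)) i)
            (t.piecewise (fun i => (Pi.single i 1 : n → ℝ)) (fun i => B i)) := by
      funext i
      by_cases h : i ∈ t <;> simp [Finset.piecewise, h]
    rw [hpw]
    have h1 := MultilinearMap.map_piecewise_smul
      (Matrix.detRowAlternating (R := ℝ) (n := n)).toMultilinearMap c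
      (t.piecewise (fun i => (Pi.single i 1 : n → ℝ)) (fun i => B i)) t
    rw [smul_eq_mul] at h1
    refine h1.trans ?_
    congr 1
    exact det_piecewise_single B t
  refine Finset.sum_pos' (fun t _ => ?_) ⟨∅, Finset.mem_univ _, ?_⟩
  · rw [hterm t]
    exact mul_nonneg (Finset.prod_nonneg fun i _ => hc i) (hD t).le
  · rw [hterm ∅]
    simpa using hD ∅

/-- A real square matrix is a P-matrix if every principal minor is positive. -/
def IsPMatrix {d : ℕ} (A : Matrix (Fin d) (Fin d) ℝ) : Prop :=
  ∀ s : Finset (Fin d),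
    0 < (A.submatrix (fun i : s => (i : Fin d)) (fun j : s => (j : Fin d))).det

theorem pmatrix_sign_characterization {d : ℕ} (A : Matrix (Fin d) (Fin d) ℝ) :
    (∀ x : Fin d → ℝ, x ≠ 0 → ∃ k : Fin d, x k * (A.mulVec x) k > 0) ↔ IsPMatrix A := by
  classical
  constructor
  · -- sign condition ⇒ P-matrix
    intro h s
    apply det_pos_of_sign
    intro y hy
    set x : Fin d → ℝ := fun i => if hi : i ∈ s then y ⟨i, hi⟩ else 0 with hx
    have hxy : ∀ k : s, x (k : Fin d) = y k := by
      intro k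
      simp [hx, k.2]
    have hx0 : x ≠ 0 := by
      obtain ⟨k, hk⟩ := Function.ne_iff.mp hy
      intro h0
      apply hk
      rw [← hxy k, h0]
      rfl
    obtain ⟨k0, hk0⟩ := h x hx0
    have hk0s : k0 ∈ s := by
      by_contra hns
      rw [hx] at hk0
      simp [hns] at hk0
    have hsum : (A.mulVec x) k0
        = ((A.submatrix (fun i : s => (i : Fin d)) (fun j : s => (j : Fin d))).mulVec y)
            ⟨k0, hk0s⟩ := by
      show (∑ j, A k0 j * x j) = ∑ j : s, A k0 (j : Fin d) * y j
      rw [show (∑ j : s, A k0 (j : Fin d) * y j) = ∑ j : s, A k0 (j : Fin d) * x (j : Fin d) from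
        Finset.sum_congr rfl fun j _ => by rw [hxy j]]
      rw [Finset.sum_coe_sort s (fun j => A k0 j * x j)]
      exact (Finset.sum_subset (Finset.subset_univ s)
        (fun j _ hjs => by simp [hx, hjs])).symm
    refine ⟨⟨k0, hk0s⟩, ?_⟩
    rw [← hsum, ← hxy ⟨k0, hk0s⟩]
    exact hk0
  · -- P-matrix ⇒ sign condition
    intro hP x hx
    by_contra hcon
    push_neg at hcon
    set s : Finset (Fin d) := Finset.univ.filter (fun i => x i ≠ 0) with hs
    set B := A.submatrix (fun i : s => (i : Fin d)) (fun j : s => (j : Fin d)) with hB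
    set y : s → ℝ := fun k => x (k : Fin d) with hy
    have hys : ∀ k : s, y k ≠ 0 := fun k => (Finset.mem_filter.mp k.2).2
    have hBy : ∀ k : s, (B.mulVec y) k = (A.mulVec x) (k : Fin d) := by
      intro k
      show (∑ j : s, A (k : Fin d) (j : Fin d) * y j) = ∑ j, A (k : Fin d) j * x j
      rw [Finset.sum_coe_sort s (fun j => A (k : Fin d) j * x j)]
      rw [← Finset.sum_subset (Finset.subset_univ s)]
      intro j _ hjs
      have : x j = 0 := by
        by_contra h0
        exact hjs (Finset.mem_filter.mpr ⟨Finset.mem_univ j, h0⟩)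
      simp [this]
    set c : s → ℝ := fun k => -((B.mulVec y) k) / y k with hc
    have hcnn : ∀ k, 0 ≤ c k := by
      intro k
      have hle : y k * (B.mulVec y) k ≤ 0 := by
        rw [hBy k]
        exact hcon (k : Fin d)
      show 0 ≤ -((B.mulVec y) k) / y k
      rcases (hys k).lt_or_gt with hlt | hgt
      · exact div_nonneg_iff.mpr (Or.inr ⟨by nlinarith, hlt.le⟩)
      · exact div_nonneg_iff.mpr (Or.inl ⟨by nlinarith, hgt.le⟩)
    have hminors : ∀ t : Finset s,
        0 < (B.submatrix (fun i : {i // i ∈ t} => (i : s))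
              (fun i : {i // i ∈ t} => (i : s))).det := by
      intro t
      set u : Finset (Fin d) := t.image (fun i : s => (i : Fin d)) with hu
      have hf : Function.Bijective
          (fun i : {i // i ∈ t} => (⟨((i : s) : Fin d),
            Finset.mem_image_of_mem _ i.2⟩ : u)) := by
        constructor
        · intro a b hab
          have h2 := congrArg (Subtype.val : u → Fin d) hab
          exact Subtype.ext (Subtype.ext h2)
        · rintro ⟨j, hj⟩
          obtain ⟨i, hi, hij⟩ := Finset.mem_image.mp hj
          exact ⟨⟨i, hi⟩, Subtype.ext hij⟩
      have heq : (B.submatrix (fun i : {i // i ∈ t} => (i : s))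
          (fun i : {i // i ∈ t} => (i : s))) =
          ((A.submatrix (fun i : u => (i : Fin d)) (fun j : u => (j : Fin d))).submatrix
            (Equiv.ofBijective _ hf) (Equiv.ofBijective _ hf)) := by
        ext i j
        rfl
      rw [heq, Matrix.det_submatrix_equiv_self]
      exact hP u
    have hzero : (B + Matrix.diagonal c).mulVec y = 0 := by
      funext k
      have : Matrix.diagonal c *ᵥ y = fun k => c k * y k := by
        funext k
        exact Matrix.mulVec_diagonal c y k
      rw [Matrix.add_mulVec, Pi.add_apply, this]
      show (B.mulVec y) k + (-((B.mulVec y) k) / y k) * y k = 0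
      rw [div_mul_cancel₀ _ (hys k)]
      ring
    have hy0 : y ≠ 0 := by
      obtain ⟨i, hi⟩ := Function.ne_iff.mp hx
      have his : i ∈ s := Finset.mem_filter.mpr ⟨Finset.mem_univ i, hi⟩
      intro h0
      exact hi (by rw [← show y ⟨i, his⟩ = x i from rfl, h0]; rfl)
    have hdet0 : (B + Matrix.diagonal c).det = 0 :=
      Matrix.exists_mulVec_eq_zero_iff.mp ⟨y, hy0, hzero⟩
    have := det_add_diagonal_pos B c hcnn hminors
    rw [hdet0] at this
    exact lt_irrefl 0 this
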